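/- arXiv:0801.1357 — 2 statements merged into one kernel-verified Lean document; each statement's English description precedes it below -/
import Mathlib

section
/- Let r : ℕ → ℝ satisfy |r(k)| ≤ ∑_{j=0}^∞ θ_j θ_{k+j} where θ_j ≥ 0 are summable with tail sums Θ_k = ∑_{i≥k} θ_i. Then n^{−1} ∑_{k=1}^{n−1} k|r(k)| ≤ C n^{−1} ∑_{k=0}^{n} Θ_k for a constant C depending only on Θ_0 = ∑_j θ_j. -/
set_option maxHeartbeats 1000000


/-- Abel-summation bound: if `|r(k)| ≤ ∑_{j≥0} θ_j θ_{k+j}` with `θ ≥ 0` summable and tail sums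
`Θ_k = ∑_{i≥k} θ_i`, then `n⁻¹ ∑_{k=1}^{n-1} k |r(k)| ≤ C n⁻¹ ∑_{k=0}^n Θ_k` for a constant `C`
depending only on `Θ_0`. -/
theorem stmt_7 (θ : ℕ → ℝ) (hθ : ∀ j, 0 ≤ θ j) (hsum : Summable θ)
    (r : ℕ → ℝ) (hr : ∀ k, |r k| ≤ ∑' j, θ j * θ (k + j)) :
    ∃ C : ℝ, 0 < C ∧ ∀ n : ℕ, 1 ≤ n →
      (n : ℝ)⁻¹ * ∑ k ∈ Finset.Ico 1 n, (k : ℝ) * |r k| ≤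
        C * (n : ℝ)⁻¹ * ∑ k ∈ Finset.range (n + 1), ∑' i, θ (k + i) := by
  set Θ : ℕ → ℝ := fun k => ∑' i, θ (k + i) with hΘdef
  have hΘsum : ∀ k, Summable (fun i => θ (k + i)) := fun k => by
    simpa [add_comm] using (summable_nat_add_iff k).2 hsum
  have hΘnn : ∀ k, 0 ≤ Θ k := fun k => tsum_nonneg (fun i => hθ _)
  have hΘmono : ∀ k d, Θ (k + d) ≤ Θ k := by
    intro k d
    exact Summable.tsum_le_tsum_of_inj (fun i => d + i) (add_right_injective d)
      (fun c _ => hθ _) (fun i => le_of_eq (by simp [add_assoc])) (hΘsum _) (hΘsum _)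
  have hΘrec : ∀ k, Θ k = θ k + Θ (k + 1) := by
    intro k
    have h0 := Summable.tsum_eq_zero_add (hΘsum k)
    simp only [add_zero] at h0
    rw [hΘdef]
    simp only
    rw [h0]
    congr 1
    exact tsum_congr fun i => congrArg θ (by omega)
  -- Abel identity
  have abel : ∀ j n : ℕ, 1 ≤ n →
      ∑ k ∈ Finset.Ico 1 n, (k : ℝ) * θ (k + j) + n * Θ (n + j)
        = ∑ k ∈ Finset.Ico 1 (n + 1), Θ (k + j) := by
    intro j n hn
    induction n with
    | zero => omega
    | succ m ih =>
      rcases Nat.lt_or_ge m 1 with hm | hm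
      · interval_cases m
        simp
      · rw [Finset.sum_Ico_succ_top hm, Finset.sum_Ico_succ_top (by omega : 1 ≤ m + 1)]
        rw [← ih hm]
        have : Θ (m + j) = θ (m + j) + Θ (m + 1 + j) := by
          rw [hΘrec (m + j)]
          congr 2
          omega
        push_cast
        rw [show m + 1 + j = m + j + 1 by omega] at this ⊢
        rw [this]
        ring
  -- key bound
  have key : ∀ j n : ℕ, 1 ≤ n →
      ∑ k ∈ Finset.Ico 1 n, (k : ℝ) * θ (k + j) ≤ ∑ k ∈ Finset.range (n + 1), Θ k := by
    intro j n hn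
    have h1 : ∑ k ∈ Finset.Ico 1 n, (k : ℝ) * θ (k + j)
        ≤ ∑ k ∈ Finset.Ico 1 (n + 1), Θ (k + j) := by
      rw [← abel j n hn]
      have : 0 ≤ (n : ℝ) * Θ (n + j) :=
        mul_nonneg (Nat.cast_nonneg n) (hΘnn _)
      linarith
    have h2 : ∑ k ∈ Finset.Ico 1 (n + 1), Θ (k + j) ≤ ∑ k ∈ Finset.Ico 1 (n + 1), Θ k :=
      Finset.sum_le_sum fun k _ => hΘmono k j
    have h3 : ∑ k ∈ Finset.Ico 1 (n + 1), Θ k ≤ ∑ k ∈ Finset.range (n + 1), Θ k := by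
      apply Finset.sum_le_sum_of_subset_of_nonneg
      · intro x hx
        simp only [Finset.mem_Ico, Finset.mem_range] at hx ⊢
        omega
      · exact fun k _ _ => hΘnn k
    linarith
  have hθtot : ∀ m, θ m ≤ ∑' i, θ i := fun m => Summable.le_tsum hsum m (fun i _ => hθ i)
  have htot_nn : 0 ≤ ∑' i, θ i := tsum_nonneg hθ
  have hsummul : ∀ k : ℕ, Summable (fun j => θ j * θ (k + j)) := by
    intro k
    apply Summable.of_nonneg_of_le (fun j => mul_nonneg (hθ j) (hθ _))
      (fun j => mul_le_mul_of_nonneg_left (hθtot _) (hθ j))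
    exact hsum.mul_right _
  refine ⟨(∑' i, θ i) + 1, by linarith, ?_⟩
  intro n hn
  set T : ℝ := ∑ k ∈ Finset.range (n + 1), Θ k with hT
  have hTnn : 0 ≤ T := Finset.sum_nonneg fun k _ => hΘnn k
  have main : ∑ k ∈ Finset.Ico 1 n, (k : ℝ) * |r k| ≤ ((∑' i, θ i) + 1) * T := by
    have step1 : ∑ k ∈ Finset.Ico 1 n, (k : ℝ) * |r k|
        ≤ ∑ k ∈ Finset.Ico 1 n, (k : ℝ) * ∑' j, θ j * θ (k + j) :=
      Finset.sum_le_sum fun k _ =>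
        mul_le_mul_of_nonneg_left (hr k) (Nat.cast_nonneg k)
    have step2 : ∑ k ∈ Finset.Ico 1 n, (k : ℝ) * ∑' j, θ j * θ (k + j)
        = ∑' j, ∑ k ∈ Finset.Ico 1 n, (k : ℝ) * (θ j * θ (k + j)) := by
      rw [Summable.tsum_finsetSum (fun k _ => ((hsummul k).mul_left _))]
      exact Finset.sum_congr rfl fun k _ => (tsum_mul_left).symm
    have step3 : ∀ j, ∑ k ∈ Finset.Ico 1 n, (k : ℝ) * (θ j * θ (k + j))
        = θ j * ∑ k ∈ Finset.Ico 1 n, (k : ℝ) * θ (k + j) := by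
      intro j
      rw [Finset.mul_sum]
      exact Finset.sum_congr rfl fun k _ => by ring
    have lhs_summable : Summable (fun j => θ j * ∑ k ∈ Finset.Ico 1 n, (k : ℝ) * θ (k + j)) := by
      apply Summable.of_nonneg_of_le
        (fun j => mul_nonneg (hθ j)
          (Finset.sum_nonneg fun k _ => mul_nonneg (Nat.cast_nonneg k) (hθ _)))
        (fun j => mul_le_mul_of_nonneg_left (key j n hn) (hθ j))
      exact hsum.mul_right T
    have step4 : ∑' j, θ j * ∑ k ∈ Finset.Ico 1 n, (k : ℝ) * θ (k + j)
        ≤ ∑' j, θ j * T := by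
      apply Summable.tsum_le_tsum _ lhs_summable (hsum.mul_right T)
      exact fun j => mul_le_mul_of_nonneg_left (key j n hn) (hθ j)
    have step5 : ∑' j, θ j * T = (∑' i, θ i) * T := tsum_mul_right
    calc ∑ k ∈ Finset.Ico 1 n, (k : ℝ) * |r k|
        ≤ ∑ k ∈ Finset.Ico 1 n, (k : ℝ) * ∑' j, θ j * θ (k + j) := step1
      _ = ∑' j, ∑ k ∈ Finset.Ico 1 n, (k : ℝ) * (θ j * θ (k + j)) := step2
      _ = ∑' j, θ j * ∑ k ∈ Finset.Ico 1 n, (k : ℝ) * θ (k + j) := tsum_congr step3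
      _ ≤ ∑' j, θ j * T := step4
      _ = (∑' i, θ i) * T := step5
      _ ≤ ((∑' i, θ i) + 1) * T := by nlinarith
  have hinv : (0 : ℝ) ≤ (n : ℝ)⁻¹ := inv_nonneg.mpr (Nat.cast_nonneg n)
  calc (n : ℝ)⁻¹ * ∑ k ∈ Finset.Ico 1 n, (k : ℝ) * |r k|
      ≤ (n : ℝ)⁻¹ * (((∑' i, θ i) + 1) * T) := mul_le_mul_of_nonneg_left main hinv
    _ = ((∑' i, θ i) + 1) * (n : ℝ)⁻¹ * T := by ring
end

section
/- Under the same assumptions, with S_{n,i,1} = ∑_{k=1}^n X_k cos(kω_i) and S_{n,j,2} = ∑_{k=1}^n X_k sin(kω_j), one has max_{1≤i,j≤q} |E S_{n,i,1} S_{n,j,2}| ≤ C ∑_{k=0}^n Θ_{k,2}. -/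
open MeasureTheory Real

private lemma expI_ne_one (x : ℝ) (h0 : x ≠ 0) (h2 : |x| < 2 * π) :
    Complex.exp (x * Complex.I) ≠ 1 := by
  intro h
  rw [Complex.exp_eq_one_iff] at h
  obtain ⟨k, hk⟩ := h
  have hk' : (x : ℂ) * Complex.I = ((k * (2 * π) : ℝ) : ℂ) * Complex.I := by
    rw [hk]; push_cast; ring
  have hx : x = k * (2 * π) := by
    have := mul_right_cancel₀ Complex.I_ne_zero hk'
    exact_mod_cast this
  have hπ := Real.pi_pos
  rcases eq_or_ne k 0 with hk0 | hk0
  · rw [hk0] at hx; simp at hx; exact h0 hx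
  · have h1 : (1:ℝ) ≤ |(k:ℝ)| := by
      have : (1:ℤ) ≤ |k| := Int.one_le_abs hk0
      calc (1:ℝ) = ((1:ℤ):ℝ) := by norm_num
        _ ≤ ((|k|:ℤ):ℝ) := by exact_mod_cast this
        _ = |(k:ℝ)| := by push_cast; ring
    have habs : |x| = |(k:ℝ)| * (2*π) := by
      rw [hx, abs_mul, abs_of_pos (show (0:ℝ) < 2*π by linarith)]
    nlinarith

private lemma sin_sum_zero (n : ℕ) (ω φ : ℝ) (h1 : Complex.exp (ω * Complex.I) ≠ 1)
    (h2 : Complex.exp (ω * Complex.I) ^ n = 1) :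
    ∑ l ∈ Finset.Icc 1 n, Real.sin (l * ω + φ) = 0 := by
  have key : ∑ l ∈ Finset.Icc 1 n, Complex.exp (((l * ω + φ : ℝ)) * Complex.I) = 0 := by
    have hterm : ∀ l : ℕ, Complex.exp (((l * ω + φ : ℝ)) * Complex.I)
        = Complex.exp (φ * Complex.I) * Complex.exp (ω * Complex.I) ^ l := by
      intro l
      rw [← Complex.exp_nat_mul, ← Complex.exp_add]
      congr 1
      push_cast
      ring
    simp_rw [hterm, ← Finset.mul_sum]
    have hz : ∑ l ∈ Finset.Icc 1 n, Complex.exp (ω * Complex.I) ^ l = 0 := by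
      rw [← Finset.Ico_add_one_right_eq_Icc, Finset.sum_Ico_eq_sum_range]
      have hs : ∀ k:ℕ, Complex.exp (ω*Complex.I) ^ (1 + k)
          = Complex.exp (ω*Complex.I) * Complex.exp (ω*Complex.I)^k := fun k => by
        rw [add_comm, pow_succ']
      simp only [Nat.add_one_sub_one]
      rw [Finset.sum_congr rfl fun k _ => hs k, ← Finset.mul_sum, geom_sum_eq h1, h2]
      simp
    rw [hz, mul_zero]
  have him : ∀ l : ℕ, Real.sin (l * ω + φ) = (Complex.exp (((l * ω + φ : ℝ)) * Complex.I)).im :=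
    fun l => (Complex.exp_ofReal_mul_I_im _).symm
  calc ∑ l ∈ Finset.Icc 1 n, Real.sin (l*ω+φ)
      = (∑ l ∈ Finset.Icc 1 n, Complex.exp (((l * ω + φ : ℝ)) * Complex.I)).im := by
        rw [Complex.im_sum]; exact Finset.sum_congr rfl fun l _ => him l
    _ = 0 := by rw [key]; rfl

private lemma exp_conds (n : ℕ) (c : ℤ) (hn : 0 < n) (hc0 : c ≠ 0) (hc : |c| < (n:ℤ)) :
    Complex.exp (((2 * π * c / n : ℝ)) * Complex.I) ≠ 1 ∧
    Complex.exp (((2 * π * c / n : ℝ)) * Complex.I) ^ n = 1 := by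
  have hπ := Real.pi_pos
  have hnR : (0:ℝ) < n := by exact_mod_cast hn
  have hcR : ((c:ℝ)) ≠ 0 := Int.cast_ne_zero.2 hc0
  constructor
  · apply expI_ne_one
    · exact div_ne_zero (mul_ne_zero (by positivity) hcR) hnR.ne'
    · have habs : |(2 * π * (c:ℝ) / n)| = 2 * π * |(c:ℝ)| / n := by
        rw [abs_div, abs_mul, abs_mul, abs_of_pos hπ, abs_of_pos hnR]
        norm_num
      have hcn : |(c:ℝ)| < (n:ℝ) := by
        have h' : ((|c|:ℤ):ℝ) < ((n:ℤ):ℝ) := by exact_mod_cast hc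
        rw [Int.cast_abs] at h'
        push_cast at h' ⊢
        exact h'
      rw [habs, div_lt_iff₀ hnR]
      nlinarith
  · have hre : ((n:ℝ)) * (2*π*(c:ℝ)/n) = (c:ℝ) * (2*π) := by field_simp
    rw [← Complex.exp_nat_mul]
    have harg : (n:ℂ) * (((2*π*(c:ℝ)/n : ℝ) : ℂ) * Complex.I) = (c:ℂ) * (2*π*Complex.I) := by
      have h2 : (((n:ℝ) * (2*π*(c:ℝ)/n) : ℝ) : ℂ) = (((c:ℝ) * (2*π) : ℝ) : ℂ) := by
        exact_mod_cast congrArg (fun t : ℝ => (t:ℂ)) hre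
      push_cast at h2 ⊢
      linear_combination Complex.I * h2
    rw [harg]
    exact Complex.exp_int_mul_two_pi_mul_I c

private lemma cos_mul_sin (x y : ℝ) :
    Real.cos x * Real.sin y = (Real.sin (x + y) - Real.sin (x - y)) / 2 := by
  rw [Real.sin_add, Real.sin_sub]; ring

private lemma G_zero (n i j u : ℕ) (hn : 0 < n) (hi : 1 ≤ i) (hi2 : 2 * i < n)
    (hj : 1 ≤ j) (hj2 : 2 * j < n) :
    ∑ l ∈ Finset.Icc 1 n,
      (Real.cos (((l + u : ℕ) : ℝ) * (2 * π * i / n)) * Real.sin ((l:ℝ) * (2 * π * j / n)) +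
       Real.cos ((l:ℝ) * (2 * π * i / n)) * Real.sin (((l + u : ℕ) : ℝ) * (2 * π * j / n))) = 0 := by
  set a : ℝ := 2 * π * i / n with ha
  set b : ℝ := 2 * π * j / n with hb
  have hnR : (0:ℝ) < n := by exact_mod_cast hn
  by_cases hij : i = j
  · subst hij
    have hba : b = a := by rw [hb, ha]
    simp only [hba]
    have hsum : ∀ l ∈ Finset.Icc 1 n,
        Real.cos (((l + u : ℕ):ℝ)*a) * Real.sin ((l:ℝ)*a) +
          Real.cos ((l:ℝ)*a) * Real.sin (((l + u : ℕ):ℝ)*a)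
        = Real.sin ((l:ℝ) * (2*a) + (u:ℝ)*a) := by
      intro l _
      rw [show (l:ℝ)*(2*a) + (u:ℝ)*a = ((l+u:ℕ):ℝ)*a + (l:ℝ)*a by push_cast; ring,
        Real.sin_add]
      ring
    rw [Finset.sum_congr rfl hsum]
    obtain ⟨hne, hpow⟩ := exp_conds n (2*i) hn (by omega)
      (by rw [abs_of_nonneg (by positivity)]; exact_mod_cast hi2)
    have h2a : (2*a) = 2 * π * ((2*i : ℤ):ℝ) / n := by rw [ha]; push_cast; ring
    refine sin_sum_zero n (2*a) ((u:ℝ)*a) ?_ ?_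
    · rw [h2a]; exact hne
    · rw [h2a]; exact hpow
  · -- i ≠ j : four oscillating sums, each vanishing
    obtain ⟨hneP, hpowP⟩ := exp_conds n ((i:ℤ)+j) hn (by omega)
      (by rw [abs_of_nonneg (by positivity)]; push_cast; omega)
    obtain ⟨hneM, hpowM⟩ := exp_conds n ((i:ℤ)-j) hn (by omega)
      (by rcases abs_cases ((i:ℤ)-(j:ℤ)) with ⟨h,_⟩|⟨h,_⟩ <;> rw [h] <;> omega)
    have hab : a + b = 2 * π * (((i:ℤ)+j : ℤ):ℝ) / n := by rw [ha, hb]; push_cast; ring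
    have hab' : a - b = 2 * π * (((i:ℤ)-j : ℤ):ℝ) / n := by rw [ha, hb]; push_cast; ring
    have hsum : ∀ l ∈ Finset.Icc 1 n,
        Real.cos (((l + u : ℕ):ℝ)*a) * Real.sin ((l:ℝ)*b) +
          Real.cos ((l:ℝ)*a) * Real.sin (((l + u : ℕ):ℝ)*b)
        = (Real.sin ((l:ℝ) * (a+b) + (u:ℝ)*a) - Real.sin ((l:ℝ) * (a-b) + (u:ℝ)*a)) / 2 +
          (Real.sin ((l:ℝ) * (a+b) + (u:ℝ)*b) - Real.sin ((l:ℝ) * (a-b) + (-((u:ℝ)*b)))) / 2 := by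
      intro l _
      have A1 : ((l+u:ℕ):ℝ)*a + (l:ℝ)*b = (l:ℝ)*(a+b) + (u:ℝ)*a := by push_cast; ring
      have A2 : ((l+u:ℕ):ℝ)*a - (l:ℝ)*b = (l:ℝ)*(a-b) + (u:ℝ)*a := by push_cast; ring
      have A3 : (l:ℝ)*a + ((l+u:ℕ):ℝ)*b = (l:ℝ)*(a+b) + (u:ℝ)*b := by push_cast; ring
      have A4 : (l:ℝ)*a - ((l+u:ℕ):ℝ)*b = (l:ℝ)*(a-b) + (-((u:ℝ)*b)) := by push_cast; ring
      rw [cos_mul_sin, cos_mul_sin, A1, A2, A3, A4]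
    rw [Finset.sum_congr rfl hsum]
    have e1 := sin_sum_zero n (a+b) ((u:ℝ)*a) (hab ▸ hneP) (hab ▸ hpowP)
    have e2 := sin_sum_zero n (a-b) ((u:ℝ)*a) (hab' ▸ hneM) (hab' ▸ hpowM)
    have e3 := sin_sum_zero n (a+b) ((u:ℝ)*b) (hab ▸ hneP) (hab ▸ hpowP)
    have e4 := sin_sum_zero n (a-b) (-((u:ℝ)*b)) (hab' ▸ hneM) (hab' ▸ hpowM)
    simp only [Finset.sum_add_distrib, ← Finset.sum_div, Finset.sum_sub_distrib]
    rw [e1, e2, e3, e4]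
    ring

private lemma sum_triangle_comm {M : Type*} [AddCommMonoid M] (n : ℕ) (g : ℕ → ℕ → M) :
    ∑ l ∈ Finset.range n, ∑ u ∈ Finset.range (n - l), g l u
      = ∑ u ∈ Finset.range n, ∑ l ∈ Finset.range (n - u), g l u := by
  have hfil : ∀ m : ℕ, m ≤ n → Finset.range m = (Finset.range n).filter (fun x => x < m) := by
    intro m hm; ext x; simp only [Finset.mem_filter, Finset.mem_range]; omega
  have step : ∀ (h : ℕ → ℕ → M),
      ∑ l ∈ Finset.range n, ∑ u ∈ Finset.range (n - l), h l u
        = ∑ l ∈ Finset.range n, ∑ u ∈ Finset.range n, if l + u < n then h l u else 0 := by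
    intro h
    refine Finset.sum_congr rfl fun l _ => ?_
    rw [hfil (n - l) (Nat.sub_le _ _), Finset.sum_filter]
    refine Finset.sum_congr rfl fun u _ => ?_
    exact if_congr (by omega) rfl rfl
  rw [step g, Finset.sum_comm, step (fun u l => g l u)]
  refine Finset.sum_congr rfl fun u _ => Finset.sum_congr rfl fun l _ => ?_
  exact if_congr (by omega) rfl rfl

private lemma regroup {M : Type*} [AddCommMonoid M] (n : ℕ) (f : ℕ → ℕ → M) :
    ∑ k ∈ Finset.Icc 1 n, ∑ l ∈ Finset.Icc 1 n, f k l
      = (∑ u ∈ Finset.range n, ∑ l ∈ Finset.Icc 1 (n - u), f (l + u) l)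
        + ∑ u ∈ Finset.range n, ∑ l ∈ Finset.Icc 1 (n - 1 - u), f l (l + u + 1) := by
  have hIoc : ∀ m : ℕ, Finset.Icc 1 m = Finset.Ioc 0 m := by
    intro m; ext x; simp only [Finset.mem_Icc, Finset.mem_Ioc]; omega
  have hsplit : ∀ k ∈ Finset.Icc 1 n,
      ∑ l ∈ Finset.Icc 1 n, f k l
        = (∑ l ∈ Finset.Icc 1 k, f k l) + ∑ l ∈ Finset.Icc (k+1) n, f k l := by
    intro k hk
    rw [Finset.mem_Icc] at hk
    have h2 : Finset.Icc (k+1) n = Finset.Ioc k n := by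
      ext x; simp only [Finset.mem_Icc, Finset.mem_Ioc]; omega
    rw [hIoc, hIoc, h2]
    exact (Finset.sum_Ioc_consecutive _ (Nat.zero_le k) hk.2).symm
  rw [Finset.sum_congr rfl hsplit, Finset.sum_add_distrib]
  congr 1
  · -- lower triangle (incl. diagonal), group by u = k - l
    have h1 : ∀ k : ℕ, ∑ l ∈ Finset.Icc 1 k, f k l = ∑ u ∈ Finset.range k, f k (k - u) := by
      intro k
      rw [← Finset.Ico_add_one_right_eq_Icc, Finset.sum_Ico_eq_sum_range]
      simp only [Nat.add_one_sub_one]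
      rw [← Finset.sum_range_reflect]
      exact Finset.sum_congr rfl fun v hv => by
        rw [Finset.mem_range] at hv; congr 1 <;> omega
    rw [Finset.sum_congr rfl (fun k _ => h1 k)]
    rw [← Finset.Ico_add_one_right_eq_Icc, Finset.sum_Ico_eq_sum_range]
    simp only [Nat.add_one_sub_one]
    rw [← Finset.sum_range_reflect]
    have h2 : ∀ m ∈ Finset.range n,
        ∑ u ∈ Finset.range (1+(n-1-m)), f (1+(n-1-m)) (1+(n-1-m)-u)
          = ∑ u ∈ Finset.range (n - m), f (n-m) (n-m-u) := by
      intro m hm; rw [Finset.mem_range] at hm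
      have e : 1 + (n-1-m) = n - m := by omega
      rw [e]
    rw [Finset.sum_congr rfl h2, sum_triangle_comm]
    refine Finset.sum_congr rfl fun u hu => ?_
    rw [Finset.mem_range] at hu
    rw [← Finset.sum_range_reflect, ← Finset.Ico_add_one_right_eq_Icc, Finset.sum_Ico_eq_sum_range]
    simp only [Nat.add_one_sub_one]
    refine Finset.sum_congr rfl fun m hm => ?_
    rw [Finset.mem_range] at hm
    congr 1 <;> omega
  · -- strict upper triangle, group by u where l = k + u + 1
    have h1 : ∀ k, ∑ l ∈ Finset.Icc (k+1) n, f k l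
        = ∑ v ∈ Finset.range (n - k), f k (k+1+v) := by
      intro k
      rw [← Finset.Ico_add_one_right_eq_Icc, Finset.sum_Ico_eq_sum_range]
      refine Finset.sum_congr (by congr 1 <;> omega) fun v _ => by congr 1 <;> omega
    rw [Finset.sum_congr rfl (fun k _ => h1 k)]
    rw [← Finset.Ico_add_one_right_eq_Icc, Finset.sum_Ico_eq_sum_range]
    simp only [Nat.add_one_sub_one]
    -- now : ∑ m ∈ range n, ∑ v ∈ range (n - (1+m)), f (1+m) (1+m+1+v)
    have h2 : ∀ m ∈ Finset.range n,
        ∑ v ∈ Finset.range (n - (1+m)), f (1+m) (1+m+1+v)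
          = ∑ v ∈ Finset.range (n-1 - m), f (m+1) (m+v+2) := by
      intro m hm
      refine Finset.sum_congr (by congr 1 <;> omega) fun v _ => by congr 1 <;> omega
    rw [Finset.sum_congr rfl h2]
    have h3 : ∀ u ∈ Finset.range n,
        ∑ l ∈ Finset.Icc 1 (n - 1 - u), f l (l + u + 1)
          = ∑ m ∈ Finset.range (n-1-u), f (m+1) (m+u+2) := by
      intro u hu
      rw [← Finset.Ico_add_one_right_eq_Icc, Finset.sum_Ico_eq_sum_range]
      refine Finset.sum_congr (by congr 1 <;> omega) fun m _ => by congr 1 <;> omega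
    rw [Finset.sum_congr rfl h3]
    -- reduce outer ranges from n to n-1 and apply the triangle swap
    rcases Nat.eq_zero_or_pos n with hn0 | hn0
    · subst hn0; simp
    have hne : n = (n-1) + 1 := by omega
    rw [hne]
    rw [Finset.sum_range_succ, Finset.sum_range_succ]
    simp only [show (n-1+1) - 1 - (n-1) = 0 by omega, Finset.range_zero, Finset.sum_empty,
      add_zero]
    have h4 : ∀ m ∈ Finset.range (n-1),
        ∑ v ∈ Finset.range ((n-1+1)-1 - m), f (m+1) (m+v+2)
          = ∑ v ∈ Finset.range ((n-1) - m), f (m+1) (m+v+2) := by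
      intro m hm
      refine Finset.sum_congr (by congr 1 <;> omega) fun v _ => rfl
    rw [Finset.sum_congr rfl h4, sum_triangle_comm]
    refine Finset.sum_congr rfl fun u hu => ?_
    refine Finset.sum_congr (by congr 1 <;> omega) fun v _ => by congr 1 <;> omega

private lemma sum_shift_le_tsum (g : ℕ → ℝ) (hg : ∀ t, 0 ≤ g t) (hgs : Summable g)
    (N j : ℕ) : ∑ x ∈ Finset.range N, g (x + j) ≤ ∑' t, g t := by
  have e : ∑ x ∈ Finset.range N, g (x + j) = ∑ x ∈ Finset.Ico j (N + j), g x := by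
    rw [Finset.sum_Ico_eq_sum_range]
    refine Finset.sum_congr (by congr 1 <;> omega) fun x _ => by rw [add_comm]
  rw [e]
  exact Summable.sum_le_tsum _ (fun _ _ => hg _) hgs

private lemma theta_chain (θ : ℕ → ℝ) (hθ : ∀ j, 0 ≤ θ j) (hθsum : Summable θ) (m : ℕ) :
    ∑ u ∈ Finset.range m, (∑' j, θ j * θ ((u+1) + j)) * (2*((u:ℝ)+1))
      ≤ 2 * (∑' j, θ j) * ∑ k ∈ Finset.range (m+1+1), ∑' i', θ (k + i') := by
  have hsum_v : ∀ v : ℕ, Summable (fun j => θ j * θ (v + j)) := by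
    intro v
    refine Summable.of_nonneg_of_le (fun j => mul_nonneg (hθ _) (hθ _)) (fun j => ?_)
      (hθsum.mul_right (∑' t, θ t))
    exact mul_le_mul_of_nonneg_left (Summable.le_tsum hθsum _ (fun _ _ => hθ _)) (hθ j)
  have key : ∑ u ∈ Finset.range m, ((u:ℝ)+1) * (∑' j, θ j * θ ((u+1) + j))
      ≤ (∑' j, θ j) * ∑ k ∈ Finset.range (m+1+1), ∑' i', θ (k + i') := by
    have e0 : ∀ u ∈ Finset.range m, ((u:ℝ)+1) * (∑' j, θ j * θ ((u+1) + j))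
        = ∑ k ∈ Finset.Ico 0 (u+1), (∑' j, θ j * θ ((u+1) + j)) := by
      intro u _
      rw [Finset.sum_const, Nat.card_Ico, Nat.sub_zero, nsmul_eq_mul]
      push_cast; ring
    rw [Finset.sum_congr rfl e0, Finset.range_eq_Ico,
      ← Finset.sum_Ico_Ico_comm 0 m (fun k u => ∑' j, θ j * θ ((u+1) + j))]
    have inner : ∀ k ∈ Finset.Ico 0 m, ∑ u ∈ Finset.Ico k m, (∑' j, θ j * θ ((u+1) + j))
        ≤ (∑' j, θ j) * (∑' i', θ ((k+1) + i')) := by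
      intro k _
      have hsummem : Summable (fun i' => θ ((k+1) + i')) :=
        ((summable_nat_add_iff (k+1)).2 hθsum).congr (fun i' => by rw [add_comm])
      rw [← Summable.tsum_finsetSum (fun u _ => hsum_v (u+1))]
      have h1 : ∀ j : ℕ, ∑ u ∈ Finset.Ico k m, θ j * θ ((u+1) + j)
          ≤ θ j * (∑' i', θ ((k+1) + i')) := by
        intro j
        rw [← Finset.mul_sum]
        refine mul_le_mul_of_nonneg_left ?_ (hθ j)
        rw [Finset.sum_Ico_eq_sum_range]
        have e2 : ∀ v ∈ Finset.range (m-k), θ ((k+v)+1 + j) = θ ((k+1) + (v+j)) := by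
          intro v _; congr 1; omega
        rw [Finset.sum_congr rfl e2]
        exact sum_shift_le_tsum (fun t => θ ((k+1)+t)) (fun _ => hθ _) hsummem (m-k) j
      calc ∑' j, ∑ u ∈ Finset.Ico k m, θ j * θ ((u+1) + j)
          ≤ ∑' j, θ j * (∑' i', θ ((k+1) + i')) := by
            refine Summable.tsum_le_tsum h1 ?_ (hθsum.mul_right _)
            exact summable_sum (fun u _ => hsum_v (u+1))
        _ = (∑' j, θ j) * (∑' i', θ ((k+1) + i')) := tsum_mul_right
    calc ∑ k ∈ Finset.Ico 0 m, ∑ u ∈ Finset.Ico k m, (∑' j, θ j * θ ((u+1) + j))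
        ≤ ∑ k ∈ Finset.Ico 0 m, (∑' j, θ j) * (∑' i', θ ((k+1) + i')) :=
          Finset.sum_le_sum inner
      _ = (∑' j, θ j) * ∑ k ∈ Finset.range m, (∑' i', θ ((k+1) + i')) := by
          rw [Finset.mul_sum, Finset.range_eq_Ico]
      _ ≤ (∑' j, θ j) * ∑ k ∈ Finset.Ico 0 (m+1+1), ∑' i', θ (k + i') := by
          refine mul_le_mul_of_nonneg_left ?_ (tsum_nonneg hθ)
          have e3 : ∑ k ∈ Finset.range m, (∑' i', θ ((k+1) + i'))
              = ∑ k ∈ Finset.Ico 1 (m+1), (∑' i', θ (k + i')) := by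
            rw [Finset.sum_Ico_eq_sum_range]
            simp only [Nat.add_sub_cancel]
            exact Finset.sum_congr rfl fun v _ => by rw [add_comm 1 v]
          rw [e3]
          refine Finset.sum_le_sum_of_subset_of_nonneg ?_
            (fun k _ _ => tsum_nonneg fun _ => hθ _)
          intro x hx
          simp only [Finset.mem_Ico] at *
          omega
    simp only [Finset.range_eq_Ico, le_refl]
  have e4 : ∑ u ∈ Finset.range m, (∑' j, θ j * θ ((u+1) + j)) * (2*((u:ℝ)+1))
      = 2 * ∑ u ∈ Finset.range m, ((u:ℝ)+1) * (∑' j, θ j * θ ((u+1) + j)) := by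
    rw [Finset.mul_sum]; exact Finset.sum_congr rfl fun u _ => by ring
  rw [e4]
  calc 2 * ∑ u ∈ Finset.range m, ((u:ℝ)+1) * (∑' j, θ j * θ ((u+1) + j))
      ≤ 2 * ((∑' j, θ j) * ∑ k ∈ Finset.range (m+1+1), ∑' i', θ (k + i')) := by linarith
    _ = 2 * (∑' j, θ j) * ∑ k ∈ Finset.range (m+1+1), ∑' i', θ (k + i') := by ring

/-- Lemma 3.3 (iii): under the same assumptions as in (i), with
`S_{n,i,1} = ∑_{k=1}^n X_k cos(k ω_i)` and `S_{n,j,2} = ∑_{k=1}^n X_k sin(k ω_j)`: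
`max_{1≤i,j≤q} |E S_{n,i,1} S_{n,j,2}| ≤ C ∑_{k=0}^n Θ_k`. -/
theorem stmt_9 (Ω : Type) [MeasurableSpace Ω] (μ : Measure Ω) [IsProbabilityMeasure μ]
    (X : ℕ → Ω → ℝ) (θ : ℕ → ℝ) (r : ℕ → ℝ)
    (hmeas : ∀ k, Measurable (X k))
    (hL2 : ∀ k, MemLp (X k) 2 μ)
    (hmean : ∫ ω, X 0 ω ∂μ = 0)
    (hθ : ∀ j, 0 ≤ θ j) (hθsum : Summable θ)
    (hcov : ∀ i u : ℕ, ∫ ω, X i ω * X (i + u) ω ∂μ = r u)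
    (hrdom : ∀ u, |r u| ≤ ∑' j, θ j * θ (u + j)) :
    ∃ C : ℝ, 0 < C ∧ ∀ n i j : ℕ, 1 ≤ i → 2 * π * i / n < π → 1 ≤ j → 2 * π * j / n < π →
      |∫ ω, (∑ k ∈ Finset.Icc 1 n, X k ω * Real.cos (k * (2 * π * i / n))) *
            (∑ k ∈ Finset.Icc 1 n, X k ω * Real.sin (k * (2 * π * j / n))) ∂μ| ≤
        C * ∑ k ∈ Finset.range (n + 1), ∑' i', θ (k + i') := by
  have hT0 : (0:ℝ) ≤ ∑' t, θ t := tsum_nonneg hθ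
  refine ⟨2 * (∑' t, θ t) + 1, by positivity, ?_⟩
  intro n i j hi hωi hj hωj
  have hΘnn : ∀ k : ℕ, (0:ℝ) ≤ ∑' i', θ (k + i') := fun k => tsum_nonneg (fun _ => hθ _)
  have hSnn : (0:ℝ) ≤ ∑ k ∈ Finset.range (n+1), ∑' i', θ (k + i') :=
    Finset.sum_nonneg fun k _ => hΘnn k
  rcases Nat.eq_zero_or_pos n with hn0 | hn
  · subst hn0
    rw [show Finset.Icc 1 0 = (∅ : Finset ℕ) from Finset.Icc_eq_empty (by omega)]
    simp only [Finset.sum_empty, zero_mul, integral_zero, abs_zero]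
    exact mul_nonneg (by positivity) hSnn
  obtain ⟨m, rfl⟩ : ∃ m, n = m + 1 := ⟨n - 1, by omega⟩
  have hnR : (0:ℝ) < ((m+1 : ℕ) : ℝ) := by exact_mod_cast hn
  have hi2 : 2 * i < m + 1 := by
    rw [div_lt_iff₀ hnR] at hωi
    have h2 : 2 * (i:ℝ) < ((m+1:ℕ):ℝ) := by nlinarith [Real.pi_pos]
    exact_mod_cast h2
  have hj2 : 2 * j < m + 1 := by
    rw [div_lt_iff₀ hnR] at hωj
    have h2 : 2 * (j:ℝ) < ((m+1:ℕ):ℝ) := by nlinarith [Real.pi_pos]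
    exact_mod_cast h2
  set a : ℝ := 2 * π * i / ((m+1 : ℕ) : ℝ) with ha
  set b : ℝ := 2 * π * j / ((m+1 : ℕ) : ℝ) with hb
  -- integrability of products
  have hXX : ∀ k l : ℕ, Integrable (fun ω => X k ω * X l ω) μ := by
    intro k l
    have h1 := ((hL2 k).add (hL2 l)).integrable_sq
    have h2 := (hL2 k).integrable_sq
    have h3 := (hL2 l).integrable_sq
    have h4 := ((h1.sub h2).sub h3).div_const (2:ℝ)
    refine h4.congr (Filter.Eventually.of_forall fun ω => ?_)
    simp only [Pi.sub_apply, Pi.add_apply]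
    ring
  have hcs : ∀ k l : ℕ, (fun ω => (X k ω * Real.cos ((k:ℝ)*a)) * (X l ω * Real.sin ((l:ℝ)*b)))
      = fun ω => (Real.cos ((k:ℝ)*a) * Real.sin ((l:ℝ)*b)) * (X k ω * X l ω) := by
    intro k l; funext ω; ring
  have hint : ∀ k l : ℕ,
      Integrable (fun ω => (X k ω * Real.cos ((k:ℝ)*a)) * (X l ω * Real.sin ((l:ℝ)*b))) μ := by
    intro k l; rw [hcs k l]; exact (hXX k l).const_mul _
  -- expansion of the integral into covariances
  have hexp : (∫ ω, (∑ k ∈ Finset.Icc 1 (m+1), X k ω * Real.cos ((k:ℝ)*a)) *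
        (∑ k ∈ Finset.Icc 1 (m+1), X k ω * Real.sin ((k:ℝ)*b)) ∂μ)
      = ∑ k ∈ Finset.Icc 1 (m+1), ∑ l ∈ Finset.Icc 1 (m+1),
          (Real.cos ((k:ℝ)*a) * Real.sin ((l:ℝ)*b)) * r ((k-l)+(l-k)) := by
    have e1 : ∀ ω, (∑ k ∈ Finset.Icc 1 (m+1), X k ω * Real.cos ((k:ℝ)*a)) *
        (∑ k ∈ Finset.Icc 1 (m+1), X k ω * Real.sin ((k:ℝ)*b))
        = ∑ k ∈ Finset.Icc 1 (m+1), ∑ l ∈ Finset.Icc 1 (m+1),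
            (X k ω * Real.cos ((k:ℝ)*a)) * (X l ω * Real.sin ((l:ℝ)*b)) :=
      fun ω => Finset.sum_mul_sum _ _ _ _
    rw [integral_congr_ae (Filter.Eventually.of_forall e1),
      integral_finset_sum _ (fun k _ => integrable_finset_sum _ (fun l _ => hint k l))]
    refine Finset.sum_congr rfl fun k _ => ?_
    rw [integral_finset_sum _ (fun l _ => hint k l)]
    refine Finset.sum_congr rfl fun l _ => ?_
    rw [hcs k l, integral_const_mul]
    congr 1
    rcases le_total k l with h | h
    · rw [show (k-l)+(l-k) = l - k from by omega, ← hcov k (l-k),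
        show k + (l-k) = l from by omega]
    · have h5 := hcov l (k-l)
      rw [show l + (k-l) = k from by omega] at h5
      rw [show (k-l)+(l-k) = k - l from by omega, ← h5]
      exact integral_congr_ae (Filter.Eventually.of_forall fun ω => by ring)
  -- diagonal sum vanishes
  have hD0 : ∑ l ∈ Finset.Icc 1 (m+1), Real.cos ((l:ℝ)*a) * Real.sin ((l:ℝ)*b) = 0 := by
    have hG0 := G_zero (m+1) i j 0 hn hi hi2 hj hj2
    rw [← ha, ← hb] at hG0
    simp only [Nat.add_zero] at hG0
    have h2 : ∑ l ∈ Finset.Icc 1 (m+1), (Real.cos ((l:ℝ)*a) * Real.sin ((l:ℝ)*b)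
          + Real.cos ((l:ℝ)*a) * Real.sin ((l:ℝ)*b))
        = ∑ l ∈ Finset.Icc 1 (m+1), Real.cos ((l:ℝ)*a) * Real.sin ((l:ℝ)*b)
          + ∑ l ∈ Finset.Icc 1 (m+1), Real.cos ((l:ℝ)*a) * Real.sin ((l:ℝ)*b) :=
      Finset.sum_add_distrib
    rw [hG0] at h2
    linarith
  -- the tail bound for each lag
  have hW : ∀ u : ℕ,
      |∑ l ∈ Finset.Icc 1 ((m+1)-(u+1)),
        (Real.cos ((((l+(u+1)):ℕ):ℝ)*a) * Real.sin ((l:ℝ)*b)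
          + Real.cos ((l:ℝ)*a) * Real.sin ((((l+(u+1)):ℕ):ℝ)*b))| ≤ 2*((u:ℝ)+1) := by
    intro u
    have hG := G_zero (m+1) i j (u+1) hn hi hi2 hj hj2
    rw [← ha, ← hb] at hG
    set F : ℕ → ℝ := fun l => Real.cos ((((l+(u+1)):ℕ):ℝ)*a) * Real.sin ((l:ℝ)*b)
      + Real.cos ((l:ℝ)*a) * Real.sin ((((l+(u+1)):ℕ):ℝ)*b) with hF
    have hIc : Finset.Icc 1 (m+1) = Finset.Ioc 0 (m+1) := by
      ext x; simp only [Finset.mem_Icc, Finset.mem_Ioc]; omega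
    have hIc2 : Finset.Icc 1 ((m+1)-(u+1)) = Finset.Ioc 0 ((m+1)-(u+1)) := by
      ext x; simp only [Finset.mem_Icc, Finset.mem_Ioc]; omega
    have hsplit := Finset.sum_Ioc_consecutive F (Nat.zero_le ((m+1)-(u+1)))
      (show (m+1)-(u+1) ≤ m+1 by omega)
    rw [hIc] at hG
    rw [hIc2]
    have hval : ∑ l ∈ Finset.Ioc 0 ((m+1)-(u+1)), F l
        = - ∑ l ∈ Finset.Ioc ((m+1)-(u+1)) (m+1), F l := by
      rw [hG] at hsplit; linarith
    rw [hval, abs_neg]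
    have hFb : ∀ l ∈ Finset.Ioc ((m+1)-(u+1)) (m+1), |F l| ≤ 2 := by
      intro l _
      have c1 : |Real.cos ((((l+(u+1)):ℕ):ℝ)*a) * Real.sin ((l:ℝ)*b)| ≤ 1 := by
        rw [abs_mul]
        nlinarith [Real.abs_cos_le_one ((((l+(u+1)):ℕ):ℝ)*a), Real.abs_sin_le_one ((l:ℝ)*b),
          abs_nonneg (Real.cos ((((l+(u+1)):ℕ):ℝ)*a)), abs_nonneg (Real.sin ((l:ℝ)*b))]
      have c2 : |Real.cos ((l:ℝ)*a) * Real.sin ((((l+(u+1)):ℕ):ℝ)*b)| ≤ 1 := by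
        rw [abs_mul]
        nlinarith [Real.abs_cos_le_one ((l:ℝ)*a), Real.abs_sin_le_one ((((l+(u+1)):ℕ):ℝ)*b),
          abs_nonneg (Real.cos ((l:ℝ)*a)), abs_nonneg (Real.sin ((((l+(u+1)):ℕ):ℝ)*b))]
      calc |F l| ≤ |Real.cos ((((l+(u+1)):ℕ):ℝ)*a) * Real.sin ((l:ℝ)*b)|
            + |Real.cos ((l:ℝ)*a) * Real.sin ((((l+(u+1)):ℕ):ℝ)*b)| := abs_add_le _ _
        _ ≤ 2 := by linarith
    calc |∑ l ∈ Finset.Ioc ((m+1)-(u+1)) (m+1), F l|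
        ≤ ∑ l ∈ Finset.Ioc ((m+1)-(u+1)) (m+1), |F l| := Finset.abs_sum_le_sum_abs _ _
      _ ≤ ∑ l ∈ Finset.Ioc ((m+1)-(u+1)) (m+1), 2 := Finset.sum_le_sum hFb
      _ = ((Finset.Ioc ((m+1)-(u+1)) (m+1)).card : ℝ) * 2 := by
          rw [Finset.sum_const, nsmul_eq_mul]
      _ ≤ 2*((u:ℝ)+1) := by
          rw [Nat.card_Ioc]
          have hc : (m+1) - ((m+1)-(u+1)) ≤ u + 1 := by omega
          have hcR : (((m+1) - ((m+1)-(u+1)) : ℕ):ℝ) ≤ ((u+1 : ℕ):ℝ) := by exact_mod_cast hc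
          push_cast at hcR ⊢
          nlinarith
  -- regrouped expression
  have hE : ∑ k ∈ Finset.Icc 1 (m+1), ∑ l ∈ Finset.Icc 1 (m+1),
        (Real.cos ((k:ℝ)*a) * Real.sin ((l:ℝ)*b)) * r ((k-l)+(l-k))
      = ∑ u ∈ Finset.range m, r (u+1) *
          (∑ l ∈ Finset.Icc 1 ((m+1)-(u+1)),
            (Real.cos ((((l+(u+1)):ℕ):ℝ)*a) * Real.sin ((l:ℝ)*b)
              + Real.cos ((l:ℝ)*a) * Real.sin ((((l+(u+1)):ℕ):ℝ)*b))) := by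
    rw [regroup (m+1) (fun k l => (Real.cos ((k:ℝ)*a) * Real.sin ((l:ℝ)*b)) * r ((k-l)+(l-k)))]
    have e1 : ∀ u ∈ Finset.range (m+1),
        ∑ l ∈ Finset.Icc 1 ((m+1)-u),
            (Real.cos ((((l+u):ℕ):ℝ)*a) * Real.sin ((l:ℝ)*b)) * r (((l+u)-l)+(l-(l+u)))
        = r u * ∑ l ∈ Finset.Icc 1 ((m+1)-u),
            Real.cos ((((l+u):ℕ):ℝ)*a) * Real.sin ((l:ℝ)*b) := by
      intro u _
      rw [Finset.mul_sum]
      refine Finset.sum_congr rfl fun l _ => ?_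
      rw [show ((l+u)-l)+(l-(l+u)) = u from by omega]
      ring
    have e2 : ∀ u ∈ Finset.range (m+1),
        ∑ l ∈ Finset.Icc 1 ((m+1)-1-u),
            (Real.cos ((l:ℝ)*a) * Real.sin ((((l+u+1):ℕ):ℝ)*b)) * r ((l-(l+u+1))+((l+u+1)-l))
        = r (u+1) * ∑ l ∈ Finset.Icc 1 ((m+1)-(u+1)),
            Real.cos ((l:ℝ)*a) * Real.sin ((((l+(u+1)):ℕ):ℝ)*b) := by
      intro u _
      rw [Finset.mul_sum]
      refine Finset.sum_congr (by congr 1 <;> omega) fun l _ => ?_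
      rw [show (l-(l+u+1))+((l+u+1)-l) = u+1 from by omega,
        show l+(u+1) = l+u+1 from by omega]
      ring
    rw [Finset.sum_congr rfl e1, Finset.sum_congr rfl e2, Finset.sum_range_succ',
      Finset.sum_range_succ]
    simp only [Nat.sub_zero, Nat.add_zero, Nat.sub_self]
    rw [hD0, mul_zero, add_zero,
      show Finset.Icc 1 0 = (∅ : Finset ℕ) from Finset.Icc_eq_empty (by omega),
      Finset.sum_empty, mul_zero, add_zero, ← Finset.sum_add_distrib]
    refine Finset.sum_congr rfl fun u _ => ?_
    rw [← mul_add, ← Finset.sum_add_distrib]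
  -- final chain
  rw [hexp, hE]
  have hbound : ∀ u ∈ Finset.range m,
      |r (u+1) * (∑ l ∈ Finset.Icc 1 ((m+1)-(u+1)),
        (Real.cos ((((l+(u+1)):ℕ):ℝ)*a) * Real.sin ((l:ℝ)*b)
          + Real.cos ((l:ℝ)*a) * Real.sin ((((l+(u+1)):ℕ):ℝ)*b)))|
      ≤ (∑' t, θ t * θ ((u+1) + t)) * (2*((u:ℝ)+1)) := by
    intro u _
    rw [abs_mul]
    refine mul_le_mul (hrdom (u+1)) (hW u) (abs_nonneg _)
      (tsum_nonneg fun t => mul_nonneg (hθ t) (hθ _))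
  calc |∑ u ∈ Finset.range m, r (u+1) *
          (∑ l ∈ Finset.Icc 1 ((m+1)-(u+1)),
            (Real.cos ((((l+(u+1)):ℕ):ℝ)*a) * Real.sin ((l:ℝ)*b)
              + Real.cos ((l:ℝ)*a) * Real.sin ((((l+(u+1)):ℕ):ℝ)*b)))|
      ≤ ∑ u ∈ Finset.range m, |r (u+1) *
          (∑ l ∈ Finset.Icc 1 ((m+1)-(u+1)),
            (Real.cos ((((l+(u+1)):ℕ):ℝ)*a) * Real.sin ((l:ℝ)*b)
              + Real.cos ((l:ℝ)*a) * Real.sin ((((l+(u+1)):ℕ):ℝ)*b)))| :=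
        Finset.abs_sum_le_sum_abs _ _
    _ ≤ ∑ u ∈ Finset.range m, (∑' t, θ t * θ ((u+1) + t)) * (2*((u:ℝ)+1)) :=
        Finset.sum_le_sum hbound
    _ ≤ 2 * (∑' t, θ t) * ∑ k ∈ Finset.range (m+1+1), ∑' i', θ (k + i') :=
        theta_chain θ hθ hθsum m
    _ ≤ (2 * (∑' t, θ t) + 1) * ∑ k ∈ Finset.range (m+1+1), ∑' i', θ (k + i') := by
        nlinarith [hSnn, hT0]
end
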